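/- (Main theorem.) Suppose 0 < ℓ ≤ r ≤ 1. Define Ā = A if ⌈1/r⌉ ≤ 1/ℓ (the good region), and Ā = A/(r·⌊1/r⌋) otherwise, where A = Σ_{i=1}^n A_i. Then the optimal power peak satisfies Ā ≤ P_opt ≤ Ā + A_max/ℓ, where A_max = max_i A_i. -/

import Mathlib

open Finset Set

/-- A scheduling policy for `n` demands with malleability parameters `l ≤ r`:
each demand `i` is supplied without interruption on `[tau i, tau i + s i] ⊆ [0,1]`,
with duration `s i ∈ [l, r]`. -/
structure Policy (l r : ℝ) (n : ℕ) where
  tau : Fin n → ℝ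
  s : Fin n → ℝ
  tau_nonneg : ∀ i, 0 ≤ tau i
  fits : ∀ i, tau i + s i ≤ 1
  s_lb : ∀ i, l ≤ s i
  s_ub : ∀ i, s i ≤ r

/-- The instantaneous power at time `t`: the sum of the consumption rates
`A i / s i` of the demands active at `t` (half-open supply intervals). -/
noncomputable def power {l r : ℝ} {n : ℕ} (A : Fin n → ℝ) (π : Policy l r n) (t : ℝ) : ℝ :=
  ∑ i : Fin n, Set.indicator (Set.Ico (π.tau i) (π.tau i + π.s i)) (fun _ => A i / π.s i) t

/-- The power peak of a policy: the supremum of the instantaneous power over `[0,1)`. -/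
noncomputable def peak {l r : ℝ} {n : ℕ} (A : Fin n → ℝ) (π : Policy l r n) : ℝ :=
  sSup (power A π '' Set.Ico (0 : ℝ) 1)

/-- The optimal power peak: the infimum of the power peaks over all policies. -/
noncomputable def Popt (l r : ℝ) (n : ℕ) (A : Fin n → ℝ) : ℝ :=
  sInf {p : ℝ | ∃ π : Policy l r n, p = peak A π}

section Aux

variable {l r : ℝ} {n : ℕ} {A : Fin n → ℝ}

lemma spos (π : Policy l r n) (hl : 0 < l) (i : Fin n) : 0 < π.s i :=
  lt_of_lt_of_le hl (π.s_lb i)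

lemma power_nonneg (π : Policy l r n) (hl : 0 < l) (hA : ∀ i, 0 < A i) (t : ℝ) :
    0 ≤ power A π t := by
  refine Finset.sum_nonneg fun i _ => Set.indicator_nonneg (fun x _ => ?_) t
  exact div_nonneg (hA i).le (spos π hl i).le

lemma power_le_sum (π : Policy l r n) (hl : 0 < l) (hA : ∀ i, 0 < A i) (t : ℝ) :
    power A π t ≤ ∑ i, A i / π.s i := by
  refine Finset.sum_le_sum fun i _ => ?_
  exact Set.indicator_apply_le' (fun _ => le_rfl)
    (fun _ => div_nonneg (hA i).le (spos π hl i).le)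

lemma bddAbove_power_image (π : Policy l r n) (hl : 0 < l) (hA : ∀ i, 0 < A i) :
    BddAbove (power A π '' Set.Ico (0 : ℝ) 1) := by
  refine ⟨∑ i, A i / π.s i, fun y hy => ?_⟩
  obtain ⟨t, -, rfl⟩ := hy
  exact power_le_sum π hl hA t

lemma le_peak (π : Policy l r n) (hl : 0 < l) (hA : ∀ i, 0 < A i) {t : ℝ}
    (ht : t ∈ Set.Ico (0 : ℝ) 1) : power A π t ≤ peak A π :=
  le_csSup (bddAbove_power_image π hl hA) ⟨t, ht, rfl⟩

lemma peak_nonneg (π : Policy l r n) (hl : 0 < l) (hA : ∀ i, 0 < A i) :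
    0 ≤ peak A π :=
  le_trans (power_nonneg π hl hA 0) (le_peak π hl hA ⟨le_rfl, one_pos⟩)

/-- The integral lower bound: the total energy is `∑ A i`, so the peak is at least `∑ A i`. -/
lemma sum_le_peak (π : Policy l r n) (hl : 0 < l) (hA : ∀ i, 0 < A i) :
    ∑ i, A i ≤ peak A π := by
  classical
  have hspos := spos π hl
  have hint : ∀ i : Fin n, MeasureTheory.Integrable
      (Set.indicator (Set.Ico (π.tau i) (π.tau i + π.s i)) (fun _ => A i / π.s i))
      (MeasureTheory.volume.restrict (Set.Ico (0:ℝ) 1)) := by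
    intro i
    rw [MeasureTheory.integrable_indicator_iff measurableSet_Ico]
    refine (MeasureTheory.integrableOn_const_iff enorm_ne_top).mpr (Or.inr ?_)
    calc (MeasureTheory.volume.restrict (Set.Ico (0:ℝ) 1)) (Set.Ico (π.tau i) (π.tau i + π.s i))
        ≤ MeasureTheory.volume (Set.Ico (π.tau i) (π.tau i + π.s i)) :=
          MeasureTheory.Measure.restrict_le_self _
      _ < ⊤ := by rw [Real.volume_Ico]; exact ENNReal.ofReal_lt_top
  have hpint : MeasureTheory.IntegrableOn (power A π) (Set.Ico (0:ℝ) 1) := by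
    unfold power
    exact MeasureTheory.integrable_finset_sum _ (fun i _ => hint i)
  have hval : ∫ t in Set.Ico (0:ℝ) 1, power A π t = ∑ i, A i := by
    unfold power
    rw [MeasureTheory.integral_finset_sum _ (fun i _ => hint i)]
    refine Finset.sum_congr rfl fun i _ => ?_
    have hsub : Set.Ico (π.tau i) (π.tau i + π.s i) ⊆ Set.Ico (0:ℝ) 1 := fun x hx =>
      ⟨le_trans (π.tau_nonneg i) hx.1, lt_of_lt_of_le hx.2 (π.fits i)⟩
    rw [MeasureTheory.setIntegral_indicator measurableSet_Ico,
      Set.inter_eq_self_of_subset_right hsub, MeasureTheory.setIntegral_const,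
      Real.volume_real_Ico_of_le (by linarith [hspos i] : π.tau i ≤ π.tau i + π.s i)]
    have h2 : π.tau i + π.s i - π.tau i = π.s i := by ring
    rw [h2, smul_eq_mul, mul_comm, div_mul_cancel₀ _ (hspos i).ne']
  have hmono : ∫ t in Set.Ico (0:ℝ) 1, power A π t
      ≤ ∫ _t in Set.Ico (0:ℝ) 1, peak A π := by
    refine MeasureTheory.setIntegral_mono_on hpint ?_ measurableSet_Ico ?_
    · exact (MeasureTheory.integrableOn_const_iff enorm_ne_top).mpr (Or.inr (by
        rw [Real.volume_Ico]; exact ENNReal.ofReal_lt_top))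
    · exact fun t ht => le_peak π hl hA ht
  rw [hval] at hmono
  rw [MeasureTheory.setIntegral_const, Real.volume_real_Ico_of_le (zero_le_one : (0:ℝ) ≤ 1)] at hmono
  simpa using hmono

/-- Lower bound in the bad region: every supply interval contains one of the `k`
points `j/(k+1)`, `1 ≤ j ≤ k`. -/
lemma peak_lower_bad (π : Policy l r n) (hl : 0 < l) (hr : 0 < r) (hA : ∀ i, 0 < A i)
    (k : ℕ) (hk : 1 ≤ k) (hkl : 1 / ((k : ℝ) + 1) < l) :
    (∑ i, A i) / (r * k) ≤ peak A π := by
  classical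
  have hspos := spos π hl
  set K : ℝ := (k : ℝ) + 1 with hK
  have hKpos : (0:ℝ) < K := by positivity
  have hkpos : (0:ℝ) < (k:ℝ) := by exact_mod_cast hk
  have hlK : 1 < l * K := by
    rw [div_lt_iff₀ hKpos] at hkl; linarith
  -- every interval contains a grid point j/K with 1 ≤ j ≤ k
  have hwit : ∀ i : Fin n, ∃ j ∈ Finset.Icc 1 k,
      ((j : ℝ) / K) ∈ Set.Ico (π.tau i) (π.tau i + π.s i) := by
    intro i
    have htau0 := π.tau_nonneg i
    have hfit := π.fits i
    have hsl := π.s_lb i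
    set c : ℕ := ⌈π.tau i * K⌉₊ with hc
    refine ⟨max c 1, ?_, ?_, ?_⟩
    · rw [Finset.mem_Icc]
      constructor
      · exact le_max_right _ _
      · have hck : c ≤ k := by
          rw [hc]
          refine Nat.ceil_le.mpr ?_
          have : π.tau i ≤ 1 - π.s i := by linarith
          have h1 : π.tau i * K ≤ (1 - l) * K := by nlinarith
          have h2 : (1 - l) * K ≤ (k : ℝ) := by nlinarith
          linarith
        exact max_le hck hk
    · -- tau i ≤ j / K
      have h1 : π.tau i * K ≤ (c : ℝ) := Nat.le_ceil _
      have h2 : (c : ℝ) ≤ ((max c 1 : ℕ) : ℝ) := by exact_mod_cast le_max_left c 1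
      rw [le_div_iff₀ hKpos]; linarith
    · -- j / K < tau i + s i
      rcases Nat.eq_zero_or_pos c with hc0 | hc1
      · have htz : π.tau i = 0 := by
          have := Nat.ceil_eq_zero.mp hc0
          nlinarith
        have hmc : max c 1 = 1 := by simp [hc0]
        rw [hmc, htz, zero_add]
        push_cast
        rw [div_lt_iff₀ hKpos]
        nlinarith
      · have hmax : max c 1 = c := max_eq_left hc1
        rw [hmax]
        have h1 : (c : ℝ) < π.tau i * K + 1 := Nat.ceil_lt_add_one (by positivity)
        rw [div_lt_iff₀ hKpos]
        nlinarith
  -- sum over grid points dominates ∑ A i / r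
  have hsum : (∑ i, A i) / r ≤ ∑ j ∈ Finset.Icc 1 k, power A π ((j : ℝ) / K) := by
    unfold power
    rw [Finset.sum_comm]
    rw [Finset.sum_div]
    refine Finset.sum_le_sum fun i _ => ?_
    obtain ⟨j0, hj0, hj0mem⟩ := hwit i
    have h1 : A i / r ≤ A i / π.s i :=
      div_le_div_of_nonneg_left (hA i).le (hspos i) (π.s_ub i)
    refine le_trans h1 ?_
    have h2 : Set.indicator (Set.Ico (π.tau i) (π.tau i + π.s i))
        (fun _ => A i / π.s i) ((j0 : ℝ) / K) = A i / π.s i :=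
      Set.indicator_of_mem hj0mem _
    calc A i / π.s i = _ := h2.symm
      _ ≤ _ := Finset.single_le_sum (f := fun j : ℕ => Set.indicator
            (Set.Ico (π.tau i) (π.tau i + π.s i)) (fun _ => A i / π.s i) ((j : ℝ) / K))
          (fun j _ => Set.indicator_nonneg
            (fun x _ => div_nonneg (hA i).le (hspos i).le) _) hj0
  -- some grid point has large power
  have hex : ∃ j ∈ Finset.Icc 1 k, (∑ i, A i) / (r * k) ≤ power A π ((j : ℝ) / K) := by
    by_contra hcon
    push_neg at hcon
    have hlt : ∑ j ∈ Finset.Icc 1 k, power A π ((j : ℝ) / K)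
        < ∑ _j ∈ Finset.Icc 1 k, (∑ i, A i) / (r * k) :=
      Finset.sum_lt_sum_of_nonempty ⟨1, Finset.mem_Icc.mpr ⟨le_rfl, hk⟩⟩ hcon
    rw [Finset.sum_const, Nat.card_Icc] at hlt
    have hcard : (k + 1 - 1) = k := by omega
    rw [hcard, nsmul_eq_mul] at hlt
    have : (k : ℝ) * ((∑ i, A i) / (r * k)) = (∑ i, A i) / r := by
      field_simp
    rw [this] at hlt
    linarith
  obtain ⟨j, hj, hjle⟩ := hex
  refine le_trans hjle (le_peak π hl hA ?_)
  rw [Finset.mem_Icc] at hj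
  constructor
  · positivity
  · rw [div_lt_one hKpos]
    have : (j : ℝ) ≤ (k : ℝ) := by exact_mod_cast hj.2
    linarith

/-- Key upper-bound construction: `m` slots of length `s` each, demands assigned
to slots by prefix sums; each slot's load is at most `(∑ A)/m + max A`. -/
lemma exists_policy_peak_le (hl : 0 < l) (hn : 1 ≤ n) (hA : ∀ i, 0 < A i)
    (m : ℕ) (s : ℝ) (hm : 1 ≤ m) (hls : l ≤ s) (hsr : s ≤ r) (hms : (m : ℝ) * s ≤ 1) :
    ∃ π : Policy l r n, peak A π ≤ (∑ i, A i) / ((m : ℝ) * s) + (⨆ i, A i) / l := by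
  classical
  have hspos : 0 < s := lt_of_lt_of_le hl hls
  have hmpos : (0:ℝ) < m := by exact_mod_cast hm
  set S := ∑ i, A i with hS
  have hSpos : 0 < S := Finset.sum_pos (fun i _ => hA i) ⟨⟨0, hn⟩, Finset.mem_univ _⟩
  haveI : Nonempty (Fin n) := ⟨⟨0, hn⟩⟩
  set Amax := ⨆ i, A i with hAmax
  have hAle : ∀ i, A i ≤ Amax := fun i =>
    le_ciSup (Set.Finite.bddAbove (Set.finite_range A)) i
  have hAmaxpos : 0 < Amax := lt_of_lt_of_le (hA ⟨0, hn⟩) (hAle _)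
  -- prefix sums and slot assignment
  set c : Fin n → ℝ := fun i => ∑ i' ∈ Finset.univ.filter (fun i' => i' < i), A i' with hc
  have hc0 : ∀ i, 0 ≤ c i := fun i => Finset.sum_nonneg fun i' _ => (hA i').le
  have hcS : ∀ i, c i + A i ≤ S := by
    intro i
    have h1 : c i + A i = ∑ i' ∈ Finset.univ.filter (fun i' => i' ≤ i), A i' := by
      rw [hc]
      have : Finset.univ.filter (fun i' => i' ≤ i)
          = insert i (Finset.univ.filter (fun i' => i' < i)) := by
        ext i'; simp [le_iff_lt_or_eq, or_comm, eq_comm]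
      rw [this, Finset.sum_insert (by simp)]
      ring
    rw [h1]
    exact Finset.sum_le_sum_of_subset_of_nonneg (Finset.filter_subset _ _)
      (fun i' _ _ => (hA i').le)
  set f : Fin n → ℕ := fun i => ⌊c i * m / S⌋₊ with hf
  have hy0 : ∀ i, 0 ≤ c i * m / S := fun i =>
    div_nonneg (mul_nonneg (hc0 i) hmpos.le) hSpos.le
  have hfm : ∀ i, f i < m := by
    intro i
    refine (Nat.floor_lt (hy0 i)).mpr ?_
    rw [div_lt_iff₀ hSpos]
    have : c i < S := by nlinarith [hA i, hcS i]
    nlinarith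
  -- load of each slot
  have hload : ∀ j : ℕ, ∑ i ∈ Finset.univ.filter (fun i => f i = j), A i ≤ S / m + Amax := by
    intro j
    set T := Finset.univ.filter (fun i => f i = j) with hT
    rcases T.eq_empty_or_nonempty with hTe | hTne
    · rw [hTe, Finset.sum_empty]; positivity
    · set imax := T.max' hTne with himax
      set imin := T.min' hTne with himin
      have hmaxT : imax ∈ T := T.max'_mem hTne
      have hminT : imin ∈ T := T.min'_mem hTne
      have hfmax : f imax = j := by
        have := hmaxT; rw [hT, Finset.mem_filter] at this; exact this.2
      have hfmin : f imin = j := by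
        have := hminT; rw [hT, Finset.mem_filter] at this; exact this.2
      have hub : c imax * m / S < (j : ℝ) + 1 := by
        have h := Nat.lt_floor_add_one (c imax * m / S)
        rw [show ⌊c imax * m / S⌋₊ = j from hfmax] at h
        exact_mod_cast h
      have hlb : (j : ℝ) ≤ c imin * m / S := by
        have h := Nat.floor_le (hy0 imin)
        rw [show ⌊c imin * m / S⌋₊ = j from hfmin] at h
        exact h
      have hcdiff : c imax - c imin < S / m := by
        rw [div_lt_iff₀ hSpos] at hub
        rw [le_div_iff₀ hSpos] at hlb
        rw [lt_div_iff₀ hmpos]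
        nlinarith
      have hsub : Finset.univ.filter (fun i' => i' < imin)
          ⊆ Finset.univ.filter (fun i' => i' < imax) := by
        intro x hx
        simp only [Finset.mem_filter, Finset.mem_univ, true_and] at hx ⊢
        exact lt_of_lt_of_le hx (T.min'_le imax hmaxT)
      have htel : ∑ i' ∈ (Finset.univ.filter (fun i' => i' < imax))
          \ (Finset.univ.filter (fun i' => i' < imin)), A i' = c imax - c imin := by
        have h := Finset.sum_sdiff (f := A) hsub
        have e1 : c imax = ∑ i' ∈ Finset.univ.filter (fun i' => i' < imax), A i' := rfl
        have e2 : c imin = ∑ i' ∈ Finset.univ.filter (fun i' => i' < imin), A i' := rfl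
        rw [e1, e2]
        linarith
      have herase : T.erase imax ⊆ (Finset.univ.filter (fun i' => i' < imax))
          \ (Finset.univ.filter (fun i' => i' < imin)) := by
        intro x hx
        rcases Finset.mem_erase.mp hx with ⟨hne, hxT⟩
        rw [Finset.mem_sdiff]
        simp only [Finset.mem_filter, Finset.mem_univ, true_and, not_lt]
        exact ⟨lt_of_le_of_ne (T.le_max' x hxT) hne, T.min'_le x hxT⟩
      have h2 : ∑ i ∈ T.erase imax, A i ≤ c imax - c imin := by
        rw [← htel]
        exact Finset.sum_le_sum_of_subset_of_nonneg herase (fun i' _ _ => (hA i').le)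
      have h3 : ∑ i ∈ T, A i = A imax + ∑ i ∈ T.erase imax, A i :=
        (Finset.add_sum_erase T A hmaxT).symm
      rw [h3]
      have := hAle imax
      linarith
  -- the policy
  have htau0 : ∀ i : Fin n, (0:ℝ) ≤ (f i : ℝ) * s := fun i => by positivity
  have hfits : ∀ i : Fin n, (f i : ℝ) * s + s ≤ 1 := by
    intro i
    have h1 : (f i : ℝ) + 1 ≤ (m : ℝ) := by exact_mod_cast hfm i
    nlinarith [mul_le_mul_of_nonneg_right h1 hspos.le]
  set π : Policy l r n :=
    ⟨fun i => (f i : ℝ) * s, fun _ => s, htau0, hfits, fun _ => hls, fun _ => hsr⟩ with hπ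
  refine ⟨π, ?_⟩
  refine Real.sSup_le ?_ (by positivity)
  rintro x ⟨t, ht, rfl⟩
  have ht0 : 0 ≤ t := ht.1
  set j : ℕ := ⌊t / s⌋₊ with hj
  have hstep : power A π t ≤ (∑ i ∈ Finset.univ.filter (fun i => f i = j), A i) / s := by
    have hcalc : power A π t ≤ ∑ i : Fin n, (if f i = j then A i / s else 0) := by
      unfold power
      refine Finset.sum_le_sum fun i _ => ?_
      have htaui : π.tau i = (f i : ℝ) * s := rfl
      have hsi : π.s i = s := rfl
      rw [htaui, hsi]
      by_cases hmem : t ∈ Set.Ico ((f i : ℝ) * s) ((f i : ℝ) * s + s)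
      · rw [Set.indicator_of_mem hmem]
        have hfij : f i = j := by
          rw [hj]
          symm
          rw [Nat.floor_eq_iff (by positivity)]
          constructor
          · rw [le_div_iff₀ hspos]; exact hmem.1
          · rw [div_lt_iff₀ hspos]
            have h2 := hmem.2
            nlinarith
        rw [if_pos hfij]
      · rw [Set.indicator_of_notMem hmem]
        split_ifs
        · exact div_nonneg (hA i).le hspos.le
        · exact le_rfl
    refine le_trans hcalc ?_
    rw [Finset.sum_div, ← Finset.sum_filter]
  refine le_trans hstep ?_
  have h4 : (∑ i ∈ Finset.univ.filter (fun i => f i = j), A i) / s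
      ≤ (S / m + Amax) / s := by gcongr; exact hload j
  refine le_trans h4 ?_
  rw [add_div, div_div]
  have h5 : Amax / s ≤ Amax / l := by gcongr
  linarith

end Aux

theorem main_theorem (l r : ℝ) (n : ℕ) (A : Fin n → ℝ)
    (hl : 0 < l) (hlr : l ≤ r) (hr : r ≤ 1) (hn : 1 ≤ n) (hA : ∀ i, 0 < A i)
    (Abar : ℝ)
    (hAbar : Abar = if (⌈(1 : ℝ) / r⌉ : ℝ) ≤ 1 / l then ∑ i, A i
      else (∑ i, A i) / (r * (⌊(1 : ℝ) / r⌋ : ℝ))) :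
    Abar ≤ Popt l r n A ∧ Popt l r n A ≤ Abar + (⨆ i, A i) / l := by
  classical
  have hrpos : 0 < r := lt_of_lt_of_le hl hlr
  have hxpos : (0:ℝ) < 1 / r := by positivity
  have hx1 : (1:ℝ) ≤ 1 / r := by rw [le_div_iff₀ hrpos]; linarith
  haveI : Nonempty (Fin n) := ⟨⟨0, hn⟩⟩
  set S := ∑ i, A i with hS
  have hSpos : 0 < S := Finset.sum_pos (fun i _ => hA i) ⟨⟨0, hn⟩, Finset.mem_univ _⟩
  set Amax := ⨆ i, A i with hAmax
  have hAle : ∀ i, A i ≤ Amax := fun i =>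
    le_ciSup (Set.Finite.bddAbove (Set.finite_range A)) i
  have hAmaxpos : 0 < Amax := lt_of_lt_of_le (hA ⟨0, hn⟩) (hAle _)
  -- the set of peaks is nonempty and bounded below
  have hne : {p : ℝ | ∃ π : Policy l r n, p = peak A π}.Nonempty := by
    refine ⟨peak A ⟨fun _ => 0, fun _ => l, fun _ => le_rfl, ?_, fun _ => le_rfl,
      fun _ => hlr⟩, ⟨_, rfl⟩⟩
    intro i; simpa using le_trans hlr hr
  have hbdd : BddBelow {p : ℝ | ∃ π : Policy l r n, p = peak A π} := by
    refine ⟨0, fun p hp => ?_⟩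
    obtain ⟨π, rfl⟩ := hp
    exact peak_nonneg π hl hA
  by_cases hgood : (⌈(1 : ℝ) / r⌉ : ℝ) ≤ 1 / l
  · -- good region
    rw [hAbar, if_pos hgood]
    constructor
    · refine le_csInf hne ?_
      rintro p ⟨π, rfl⟩
      exact sum_le_peak π hl hA
    · set m : ℕ := ⌈(1:ℝ)/r⌉₊ with hm
      have hm1 : 1 ≤ m := Nat.one_le_iff_ne_zero.mpr (by
        simp only [hm, ne_eq, Nat.ceil_eq_zero, not_le]; exact hxpos)
      have hmpos : (0:ℝ) < (m:ℝ) := by exact_mod_cast hm1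
      have hmcast : ((m : ℕ) : ℝ) = ((⌈(1 : ℝ) / r⌉ : ℤ) : ℝ) :=
        natCast_ceil_eq_intCast_ceil hxpos.le
      have hls : l ≤ 1 / (m:ℝ) := by
        rw [le_div_iff₀ hmpos]
        have h1 : (m:ℝ) ≤ 1 / l := by rw [hmcast]; exact hgood
        rw [le_div_iff₀ hl] at h1
        linarith
      have hsr : 1 / (m:ℝ) ≤ r := by
        rw [div_le_iff₀ hmpos]
        have h1 : 1 / r ≤ (m:ℝ) := Nat.le_ceil _
        rw [div_le_iff₀ hrpos] at h1
        linarith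
      have hms : (m:ℝ) * (1/(m:ℝ)) ≤ 1 := by
        rw [mul_one_div_cancel hmpos.ne']
      obtain ⟨π, hπ⟩ := exists_policy_peak_le (r := r) hl hn hA m (1/(m:ℝ)) hm1 hls hsr hms
      rw [mul_one_div_cancel hmpos.ne', div_one] at hπ
      exact le_trans (csInf_le hbdd ⟨π, rfl⟩) hπ
  · -- bad region
    rw [hAbar, if_neg hgood]
    push_neg at hgood
    set k : ℕ := ⌊(1:ℝ)/r⌋₊ with hk
    have hk1 : 1 ≤ k := Nat.le_floor (by exact_mod_cast hx1)
    have hkpos : (0:ℝ) < (k:ℝ) := by exact_mod_cast hk1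
    have hkcast : ((k : ℕ) : ℝ) = ((⌊(1 : ℝ) / r⌋ : ℤ) : ℝ) :=
      natCast_floor_eq_intCast_floor hxpos.le
    have hceil : (⌈(1 : ℝ) / r⌉ : ℝ) ≤ (k : ℝ) + 1 := by
      rw [hkcast]
      have := Int.ceil_le_floor_add_one ((1:ℝ)/r)
      exact_mod_cast this
    have hkl : 1 / ((k:ℝ) + 1) < l := by
      have h1 : 1 / l < (k:ℝ) + 1 := lt_of_lt_of_le hgood hceil
      rw [div_lt_iff₀ hl] at h1
      rw [div_lt_iff₀ (by positivity : (0:ℝ) < (k:ℝ)+1)]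
      nlinarith
    have hkr : (k:ℝ) * r ≤ 1 := by
      have h1 : (k:ℝ) ≤ 1 / r := Nat.floor_le hxpos.le
      rw [le_div_iff₀ hrpos] at h1
      linarith
    constructor
    · refine le_csInf hne ?_
      rintro p ⟨π, rfl⟩
      have := peak_lower_bad π hl hrpos hA k hk1 hkl
      rw [← hkcast]
      exact this
    · obtain ⟨π, hπ⟩ := exists_policy_peak_le (r := r) hl hn hA k r hk1 hlr le_rfl hkr
      rw [← hkcast]
      have : S / (r * (k:ℝ)) = S / ((k:ℝ) * r) := by rw [mul_comm]
      rw [this]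
      exact le_trans (csInf_le hbdd ⟨π, rfl⟩) hπ
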